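/- Let d ≥ 1 be an integer. For every integer D ≥ 0, the polynomial p(t) = Σ_{i=0}^D C(i+d−1, i)(1−t)^i of degree at most D satisfies: (a) |1/t^d − p(t)| ≤ |1−t|^{D+1} · C(D+d, d) · d for all t ∈ [d/(d+D), 2 − d/(d+D)]; and (b) |p(t)| ≤ C(D+d, d) for all t ∈ [0, 2]. -/

import Mathlib

lemma reciprocal_tel (d D : ℕ) (t : ℝ) :
    t * ∑ i ∈ Finset.range (D+1), ((i+d).choose i : ℝ) * (1-t)^i
      = (∑ i ∈ Finset.range (D+1), ((i+d-1).choose i : ℝ) * (1-t)^i)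
        - ((D+d).choose D : ℝ) * (1-t)^(D+1) := by
  induction D with
  | zero => simp
  | succ D ih =>
    rw [Finset.sum_range_succ, Finset.sum_range_succ
      (f := fun i => ((i+d-1).choose i : ℝ) * (1-t)^i)]
    have h1 : D + 1 + d - 1 = D + d := by omega
    have h2 : ((D+1+d).choose (D+1) : ℝ) = (D+d).choose D + (D+d).choose (D+1) := by
      rw [show D+1+d = (D+d)+1 by ring]
      exact_mod_cast Nat.choose_succ_succ (D+d) D
    rw [h1]
    linear_combination ih + (1-t)^(D+1) * h2

lemma reciprocal_key (d D : ℕ) (t : ℝ) :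
    t^d * ∑ i ∈ Finset.range (D+1), ((i+d-1).choose i : ℝ) * (1-t)^i
      = 1 - (1-t)^(D+1) * ∑ k ∈ Finset.range d, ((D+k).choose D : ℝ) * t^k := by
  induction d with
  | zero =>
    rw [Finset.sum_eq_single 0]
    · simp
    · intro i _ hi
      rw [show i + 0 - 1 = i - 1 by omega, Nat.choose_eq_zero_of_lt (by omega)]
      simp
    · simp
  | succ d ih =>
    have hc : ∀ i ∈ Finset.range (D+1),
        ((i+(d+1)-1).choose i : ℝ) * (1-t)^i = ((i+d).choose i : ℝ) * (1-t)^i := by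
      intro i _
      rw [show i + (d+1) - 1 = i + d by omega]
    rw [Finset.sum_congr rfl hc,
      Finset.sum_range_succ (f := fun k => ((D+k).choose D : ℝ) * t^k)]
    linear_combination t^d * reciprocal_tel d D t + ih

lemma reciprocal_aux1 (d D : ℕ) : ∀ j k, k + j = d →
    (D+k).choose D * (d+D)^j ≤ (D+d).choose D * d^j := by
  intro j
  induction j with
  | zero => intro k hk; simp [show k = d by omega]
  | succ j ih =>
    intro k hk
    have h1 := ih (k+1) (by omega)
    have step : (D+k).choose D * (d+D) ≤ (D+k+1).choose D * d := by
      have hsym1 : (D+k).choose D = (D+k).choose k := by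
        rw [← Nat.choose_symm (by omega)]; congr 1; omega
      have hsym2 : (D+k+1).choose D = (D+k+1).choose (k+1) := by
        rw [← Nat.choose_symm (by omega)]; congr 1; omega
      have hmul := Nat.add_one_mul_choose_eq (D+k) k
      refine Nat.le_of_mul_le_mul_left ?_ (Nat.succ_pos k)
      calc (k+1) * ((D+k).choose D * (d+D)) = (D+k).choose k * ((d+D)*(k+1)) := by
            rw [hsym1]; ring
        _ ≤ (D+k).choose k * ((D+k+1)*d) := by
            apply Nat.mul_le_mul_left
            have : k + 1 ≤ d := by omega
            nlinarith
        _ = ((D+k).succ * (D+k).choose k) * d := by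
            simp only [Nat.succ_eq_add_one]; ring
        _ = (k+1) * ((D+k+1).choose D * d) := by
            rw [hmul, hsym2]; ring
    calc (D+k).choose D * (d+D)^(j+1) = ((D+k).choose D * (d+D)) * (d+D)^j := by ring
      _ ≤ ((D+k+1).choose D * d) * (d+D)^j := Nat.mul_le_mul_right _ step
      _ = d * ((D+k+1).choose D * (d+D)^j) := by ring
      _ ≤ d * ((D+d).choose D * d^j) := Nat.mul_le_mul_left _ h1
      _ = (D+d).choose D * d^(j+1) := by ring

lemma reciprocal_hs (d D : ℕ) :
    ∑ i ∈ Finset.range (D+1), (i+d-1).choose i = (D+d).choose d := by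
  induction D with
  | zero => simp
  | succ D ih =>
    rw [Finset.sum_range_succ, ih, show D+1+d-1 = D+d by omega]
    have h1 : (D+d).choose d = (D+d).choose D := by
      rw [← Nat.choose_symm (by omega)]; congr 1; omega
    have h2 : (D+1+d).choose d = (D+1+d).choose (D+1) := by
      rw [← Nat.choose_symm (by omega)]; congr 1; omega
    rw [h1, h2, show D+1+d = (D+d)+1 by omega, Nat.choose_succ_succ]

/-- For `d ≥ 1` and `D ≥ 0`, the polynomial `p(t) = Σ_{i=0}^D C(i+d−1,i)(1−t)^i` of degree
at most `D` satisfies `|1/t^d − p(t)| ≤ |1−t|^{D+1}·C(D+d,d)·d` on `[d/(d+D), 2 − d/(d+D)]`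
and `|p(t)| ≤ C(D+d,d)` on `[0,2]`. -/
theorem reciprocal_power_approx (d D : ℕ) (hd : 1 ≤ d) :
    ∀ p : Polynomial ℝ,
      p = ∑ i ∈ Finset.range (D + 1), ((i + d - 1).choose i : ℝ) • ((1 - Polynomial.X) ^ i) →
      p.natDegree ≤ D ∧
      (∀ t : ℝ, (d : ℝ) / (d + D) ≤ t → t ≤ 2 - (d : ℝ) / (d + D) →
        |1 / t ^ d - p.eval t| ≤ |1 - t| ^ (D + 1) * ((D + d).choose d) * d) ∧
      (∀ t : ℝ, 0 ≤ t → t ≤ 2 → |p.eval t| ≤ ((D + d).choose d : ℝ)) := by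
  intro p hp
  have hd0 : (0:ℝ) < d := by exact_mod_cast hd
  have hdD : (0:ℝ) < (d:ℝ) + D := by positivity
  have heval : ∀ t : ℝ,
      p.eval t = ∑ i ∈ Finset.range (D+1), ((i+d-1).choose i : ℝ) * (1-t)^i := by
    intro t
    subst hp
    simp [Polynomial.eval_finset_sum]
  have hsymm : (D+d).choose d = (D+d).choose D := by
    rw [← Nat.choose_symm (by omega)]; congr 1; omega
  refine ⟨?_, ?_, ?_⟩
  · -- degree bound
    subst hp
    apply Polynomial.natDegree_sum_le_of_forall_le
    intro i hi
    refine (Polynomial.natDegree_smul_le _ _).trans ?_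
    refine (Polynomial.natDegree_pow_le).trans ?_
    have h1 : ((1:Polynomial ℝ) - Polynomial.X).natDegree ≤ 1 := by
      refine (Polynomial.natDegree_sub_le _ _).trans ?_
      simp
    have hi' : i ≤ D := by
      have := Finset.mem_range.mp hi; omega
    calc i * ((1:Polynomial ℝ) - Polynomial.X).natDegree ≤ i * 1 :=
          Nat.mul_le_mul_left _ h1
      _ ≤ D := by omega
  · -- approximation bound
    intro t ht1 ht2
    have hdp : (0:ℝ) < (d:ℝ)/(d+D) := by positivity
    have ht0 : 0 < t := lt_of_lt_of_le hdp ht1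
    have htd : (0:ℝ) < t^d := by positivity
    rw [heval]
    have herr : 1/t^d - (∑ i ∈ Finset.range (D+1), ((i+d-1).choose i : ℝ) * (1-t)^i)
        = (1-t)^(D+1) * (∑ k ∈ Finset.range d, ((D+k).choose D : ℝ) * t^k) / t^d := by
      rw [eq_div_iff (ne_of_gt htd)]
      have hK := reciprocal_key d D t
      field_simp
      linarith [hK]
    rw [herr]
    have hSnn : (0:ℝ) ≤ ∑ k ∈ Finset.range d, ((D+k).choose D : ℝ) * t^k := by
      apply Finset.sum_nonneg
      intro k _
      positivity
    rw [abs_div, abs_mul, abs_of_nonneg hSnn, abs_of_pos htd, abs_pow, mul_div_assoc]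
    -- bound the sum over t^d
    have hterm : ∀ k ∈ Finset.range d,
        ((D+k).choose D : ℝ) * t^k / t^d ≤ ((D+d).choose D : ℝ) := by
      intro k hk
      have hkd : k < d := Finset.mem_range.mp hk
      have hpowsplit : t^d = t^k * t^(d-k) := by
        rw [← pow_add]; congr 1; omega
      have h1 : ((D+k).choose D : ℝ) * t^k / t^d
          = ((D+k).choose D : ℝ) * (1/t^(d-k)) := by
        rw [hpowsplit]
        field_simp
      rw [h1]
      have hinv : 1/t ≤ ((d:ℝ)+D)/d := by
        rw [div_le_div_iff₀ ht0 hd0, one_mul]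
        have hmm := mul_le_mul_of_nonneg_right ht1 (le_of_lt hdD)
        have hid : (d:ℝ)/(d+D)*((d:ℝ)+D) = d := by field_simp
        nlinarith
      have h2 : 1/t^(d-k) ≤ (((d:ℝ)+D)/d)^(d-k) := by
        rw [show (1:ℝ)/t^(d-k) = (1/t)^(d-k) by rw [div_pow, one_pow]]
        exact pow_le_pow_left₀ (by positivity) hinv _
      have h3 : ((D+k).choose D : ℝ) * (((d:ℝ)+D)/d)^(d-k) ≤ ((D+d).choose D : ℝ) := by
        have hnat := reciprocal_aux1 d D (d-k) k (by omega)
        have hcast : ((D+k).choose D : ℝ) * ((d:ℝ)+D)^(d-k)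
            ≤ ((D+d).choose D : ℝ) * (d:ℝ)^(d-k) := by exact_mod_cast hnat
        rw [div_pow, ← mul_div_assoc, div_le_iff₀ (by positivity)]
        exact hcast
      calc ((D+k).choose D : ℝ) * (1/t^(d-k))
          ≤ ((D+k).choose D : ℝ) * (((d:ℝ)+D)/d)^(d-k) := by
            apply mul_le_mul_of_nonneg_left h2 (by positivity)
        _ ≤ ((D+d).choose D : ℝ) := h3
    have hsumbound : (∑ k ∈ Finset.range d, ((D+k).choose D : ℝ) * t^k) / t^d
        ≤ d * ((D+d).choose D : ℝ) := by
      rw [Finset.sum_div]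
      calc ∑ k ∈ Finset.range d, ((D+k).choose D : ℝ) * t^k / t^d
          ≤ ∑ _k ∈ Finset.range d, ((D+d).choose D : ℝ) :=
            Finset.sum_le_sum hterm
        _ = d * ((D+d).choose D : ℝ) := by
            rw [Finset.sum_const, Finset.card_range, nsmul_eq_mul]
    calc |1-t|^(D+1) * ((∑ k ∈ Finset.range d, ((D+k).choose D : ℝ) * t^k) / t^d)
        ≤ |1-t|^(D+1) * (d * ((D+d).choose D : ℝ)) := by
          apply mul_le_mul_of_nonneg_left hsumbound (by positivity)
      _ = |1-t|^(D+1) * ((D+d).choose d : ℝ) * d := by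
          rw [hsymm]; ring
  · -- uniform bound
    intro t ht0 ht2
    rw [heval]
    have hx : |1-t| ≤ 1 := by
      rw [abs_le]; constructor <;> linarith
    calc |∑ i ∈ Finset.range (D+1), ((i+d-1).choose i : ℝ) * (1-t)^i|
        ≤ ∑ i ∈ Finset.range (D+1), |((i+d-1).choose i : ℝ) * (1-t)^i| :=
          Finset.abs_sum_le_sum_abs _ _
      _ ≤ ∑ i ∈ Finset.range (D+1), ((i+d-1).choose i : ℝ) := by
          apply Finset.sum_le_sum
          intro i _
          rw [abs_mul, abs_pow, Nat.abs_cast]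
          calc ((i+d-1).choose i : ℝ) * |1-t|^i
              ≤ ((i+d-1).choose i : ℝ) * 1 := by
                apply mul_le_mul_of_nonneg_left _ (by positivity)
                exact pow_le_one₀ (abs_nonneg _) hx
            _ = ((i+d-1).choose i : ℝ) := mul_one _
      _ = ((D+d).choose d : ℝ) := by
          rw [← Nat.cast_sum, reciprocal_hs d D]
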